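/- Let (S, σ, τ) be a frame for R, let ρ : S → R be the ring homomorphism equal to the projection S₀ → R on S₀ and zero on Sₙ for n ≠ 0, let M and N be finitely generated graded S-modules with M projective as an S-module, and let f : N → M be a degree-preserving S-linear map. Then f is bijective if and only if its reduction f̄ : N ⊗_{S,ρ} R → M ⊗_{S,ρ} R is bijective. -/

import Mathlib

/-- A (higher) frame. -/
structure Frame (p : ℕ) (S : Type) [CommRing S] where
  grade : ℤ → AddSubgroup S
  one_mem : (1 : S) ∈ grade 0
  mul_mem : ∀ {m n : ℤ} {a b : S}, a ∈ grade m → b ∈ grade n → a * b ∈ grade (m + n)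
  isInternal : DirectSum.IsInternal grade
  σ : S →+* S
  τ : S →+* S
  σ_mem : ∀ s, σ s ∈ grade 0
  τ_mem : ∀ s, τ s ∈ grade 0
  τ_id : ∀ s ∈ grade 0, τ s = s
  τ_bij : ∀ n : ℕ, 1 ≤ n → Set.BijOn τ (grade (-(n : ℤ))) (grade 0)
  t : S
  t_mem : t ∈ grade (-1)
  τ_t : τ t = 1
  σ_frob : ∀ s ∈ grade 0, ∃ c ∈ grade 0, σ s = s ^ p + (p : S) * c
  σ_t : σ t = (p : S)
  p_jac : ∀ x ∈ grade 0, ∃ y ∈ grade 0, (1 - (p : S) * x) * y = 1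

variable {p : ℕ} {S : Type} [CommRing S]

/-- The degree zero subring S₀ of a frame. -/
def Frame.S0 (F : Frame p S) : Subring S where
  carrier := F.grade 0
  mul_mem' {a b} ha hb := by simpa using F.mul_mem ha hb
  one_mem' := F.one_mem
  add_mem' {a b} ha hb := add_mem ha hb
  zero_mem' := zero_mem _
  neg_mem' {a} ha := neg_mem ha

/-- The ideal tS₁ ⊆ S₀. -/
def Frame.tS1 (F : Frame p S) : Ideal F.S0 where
  carrier := {a | ∃ x ∈ F.grade 1, (a : S) = F.t * x}
  add_mem' := by
    rintro a b ⟨x, hx, hax⟩ ⟨y, hy, hby⟩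
    exact ⟨x + y, add_mem hx hy, by push_cast [hax, hby]; ring⟩
  zero_mem' := ⟨0, zero_mem _, by simp⟩
  smul_mem' := by
    rintro c a ⟨x, hx, hax⟩
    refine ⟨(c : S) * x, by simpa using F.mul_mem c.2 hx, ?_⟩
    show ((c * a : F.S0) : S) = _
    push_cast [hax]; ring

/-- The ring R = S₀/tS₁ of a frame. -/
abbrev Frame.R (F : Frame p S) : Type := F.S0 ⧸ F.tS1

/-- The kernel of ρ : S → R, the graded ideal with K₀ = tS₁ and Kₙ = Sₙ for n ≠ 0. -/
def Frame.kerRho (F : Frame p S) : Ideal S :=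
  Ideal.span ({s : S | ∃ x ∈ F.grade 1, s = F.t * x} ∪ ⋃ (n : ℤ) (_ : n ≠ 0), (F.grade n : Set S))


noncomputable def gproj {ι : Type} [DecidableEq ι] {A : Type} [AddCommGroup A]
    (ℳ : ι → AddSubgroup A) [DirectSum.Decomposition ℳ] (n : ι) : A →+ A :=
  ((ℳ n).subtype).comp ((DFinsupp.evalAddMonoidHom n).comp
    (DirectSum.decomposeAddEquiv ℳ).toAddMonoidHom)

section P2
variable {ι : Type} [DecidableEq ι] {A : Type} [AddCommGroup A]
  (ℳ : ι → AddSubgroup A) [DirectSum.Decomposition ℳ]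
lemma gproj_apply (n : ι) (x : A) : gproj ℳ n x = (DirectSum.decompose ℳ x n : A) := rfl
lemma gproj_mem (n : ι) (x : A) : gproj ℳ n x ∈ ℳ n := (DirectSum.decompose ℳ x n).2
lemma gproj_of_mem_same {n : ι} {x : A} (h : x ∈ ℳ n) : gproj ℳ n x = x :=
  DirectSum.decompose_of_mem_same ℳ h
lemma gproj_of_mem_ne {m n : ι} {x : A} (h : x ∈ ℳ m) (hmn : m ≠ n) : gproj ℳ n x = 0 :=
  DirectSum.decompose_of_mem_ne ℳ h hmn
lemma exists_gproj_finset (x : A) :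
    ∃ s : Finset ι, (∀ m ∉ s, gproj ℳ m x = 0) ∧ ∑ m ∈ s, gproj ℳ m x = x := by
  classical
  refine ⟨(DirectSum.decompose ℳ x).support, fun m hm => ?_, ?_⟩
  · rw [DFinsupp.notMem_support_iff] at hm
    rw [gproj_apply, hm]; rfl
  · simpa only [gproj_apply] using DirectSum.sum_support_decompose ℳ x
end P2

section Smul

variable {S : Type} [CommRing S] (𝒜 : ℤ → AddSubgroup S) [DirectSum.Decomposition 𝒜]
variable {M : Type} [AddCommGroup M] [Module S M] (ℳ : ℤ → AddSubgroup M)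
  [DirectSum.Decomposition ℳ]
variable (hsm : ∀ {m n : ℤ} {a : S} {x : M}, a ∈ 𝒜 m → x ∈ ℳ n → a • x ∈ ℳ (m + n))

include hsm

lemma gproj_smul_left {a : S} {j : ℤ} (ha : a ∈ 𝒜 j) (x : M) (n : ℤ) :
    gproj ℳ n (a • x) = a • gproj ℳ (n - j) x := by
  obtain ⟨s, hs0, hs⟩ := exists_gproj_finset ℳ x
  conv_lhs => rw [← hs]
  rw [Finset.smul_sum, map_sum]
  have key : ∀ m ∈ s, gproj ℳ n (a • gproj ℳ m x) =
      if m = n - j then a • gproj ℳ m x else 0 := by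
    intro m _
    by_cases h : m = n - j
    · subst h
      rw [if_pos rfl]
      refine gproj_of_mem_same ℳ ?_
      have h3 := hsm ha (gproj_mem ℳ (n - j) x)
      have h2 : j + (n - j) = n := by ring
      rwa [h2] at h3
    · rw [if_neg h]
      exact gproj_of_mem_ne ℳ (hsm ha (gproj_mem ℳ m x)) (by omega)
  rw [Finset.sum_congr rfl key, Finset.sum_ite_eq' s (n - j)]
  by_cases h : n - j ∈ s
  · rw [if_pos h]
  · rw [if_neg h, hs0 _ h, smul_zero]

lemma gproj_smul_right (a : S) {e : ℤ} {y : M} (hy : y ∈ ℳ e) (n : ℤ) :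
    gproj ℳ n (a • y) = (gproj 𝒜 (n - e) a) • y := by
  obtain ⟨s, hs0, hs⟩ := exists_gproj_finset 𝒜 a
  conv_lhs => rw [← hs]
  rw [Finset.sum_smul, map_sum]
  have key : ∀ m ∈ s, gproj ℳ n ((gproj 𝒜 m a) • y) =
      if m = n - e then (gproj 𝒜 m a) • y else 0 := by
    intro m _
    by_cases h : m = n - e
    · subst h
      rw [if_pos rfl]
      refine gproj_of_mem_same ℳ ?_
      have h3 := hsm (gproj_mem 𝒜 (n - e) a) hy
      have h2 : (n - e) + e = n := by ring
      rwa [h2] at h3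
    · rw [if_neg h]
      exact gproj_of_mem_ne ℳ (hsm (gproj_mem 𝒜 m a) hy) (by omega)
  rw [Finset.sum_congr rfl key, Finset.sum_ite_eq' s (n - e)]
  by_cases h : n - e ∈ s
  · rw [if_pos h]
  · rw [if_neg h, hs0 _ h, zero_smul]

end Smul

section Map
variable {S : Type} [CommRing S]
variable {M : Type} [AddCommGroup M] [Module S M] (ℳ : ℤ → AddSubgroup M)
  [DirectSum.Decomposition ℳ]
variable {N : Type} [AddCommGroup N] [Module S N] (𝒩 : ℤ → AddSubgroup N)
  [DirectSum.Decomposition 𝒩]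

lemma gproj_map_comm (f : N →ₗ[S] M) (hf : ∀ (n : ℤ), ∀ x ∈ 𝒩 n, f x ∈ ℳ n)
    (x : N) (n : ℤ) : gproj ℳ n (f x) = f (gproj 𝒩 n x) := by
  obtain ⟨s, hs0, hs⟩ := exists_gproj_finset 𝒩 x
  conv_lhs => rw [← hs, map_sum f, map_sum]
  have key : ∀ m ∈ s, gproj ℳ n (f (gproj 𝒩 m x)) =
      if m = n then f (gproj 𝒩 m x) else 0 := by
    intro m _
    by_cases h : m = n
    · subst h; rw [if_pos rfl]
      exact gproj_of_mem_same ℳ (hf m _ (gproj_mem 𝒩 m x))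
    · rw [if_neg h]
      exact gproj_of_mem_ne ℳ (hf m _ (gproj_mem 𝒩 m x)) h
  rw [Finset.sum_congr rfl key, Finset.sum_ite_eq' s n]
  by_cases h : n ∈ s
  · rw [if_pos h]
  · rw [if_neg h, hs0 _ h, map_zero]

end Map

namespace Frame

variable {p : ℕ} {S : Type} [CommRing S] (F : Frame p S)

lemma t_pow_mem (n : ℕ) : F.t ^ n ∈ F.grade (-(n : ℤ)) := by
  induction n with
  | zero => simpa using F.one_mem
  | succ k ih =>
    have h := F.mul_mem ih F.t_mem
    have h2 : (-(k : ℤ)) + (-1) = -((k + 1 : ℕ) : ℤ) := by push_cast; ring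
    rw [pow_succ]
    rwa [h2] at h

lemma eq_t_pow_mul (n : ℕ) (hn : 1 ≤ n) {s : S} (hs : s ∈ F.grade (-(n : ℤ))) :
    ∃ c ∈ F.grade 0, s = F.t ^ n * c := by
  refine ⟨F.τ s, F.τ_mem s, ?_⟩
  have h1 : F.t ^ n * F.τ s ∈ F.grade (-(n : ℤ)) := by
    have h := F.mul_mem (F.t_pow_mem n) (F.τ_mem s)
    simpa using h
  refine (F.τ_bij n hn).injOn hs h1 ?_
  rw [map_mul, map_pow, F.τ_t, one_pow, one_mul, F.τ_id _ (F.τ_mem s)]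

lemma mul_t_factor {m : ℕ} (hm : 1 ≤ m) {b : S} (hb : b ∈ F.grade (-(m : ℤ)))
    {a : S} (ha : a ∈ F.grade (m : ℤ)) : ∃ x ∈ F.grade 1, a * b = F.t * x := by
  obtain ⟨c, hc, rfl⟩ := F.eq_t_pow_mul m hm hb
  obtain ⟨k, rfl⟩ : ∃ k, m = k + 1 := ⟨m - 1, by omega⟩
  refine ⟨F.t ^ k * c * a, ?_, by rw [pow_succ]; ring⟩
  have h1 := F.mul_mem (F.mul_mem (F.t_pow_mem k) hc) ha
  have h2 : (-(k : ℤ) + 0 + ((k + 1 : ℕ) : ℤ)) = 1 := by push_cast; ring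
  rwa [h2] at h1

lemma mul_opp_deg {j : ℤ} (hj : j ≠ 0) {a b : S} (ha : a ∈ F.grade j)
    (hb : b ∈ F.grade (-j)) : ∃ x ∈ F.grade 1, a * b = F.t * x := by
  rcases lt_or_gt_of_ne hj with h | h
  · -- j < 0 : use -j > 0, roles swapped
    obtain ⟨m, hm⟩ : ∃ m : ℕ, (m : ℤ) = -j := ⟨(-j).toNat, Int.toNat_of_nonneg (by omega)⟩
    have hb' : b ∈ F.grade (m : ℤ) := by rwa [hm]
    have ha' : a ∈ F.grade (-(m : ℤ)) := by rw [hm]; simpa using ha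
    obtain ⟨x, hx, hbx⟩ := F.mul_t_factor (by omega) ha' hb'
    exact ⟨x, hx, by rw [mul_comm, hbx]⟩
  · obtain ⟨m, hm⟩ : ∃ m : ℕ, (m : ℤ) = j := ⟨j.toNat, Int.toNat_of_nonneg (by omega)⟩
    have ha' : a ∈ F.grade (m : ℤ) := by rwa [hm]
    have hb' : b ∈ F.grade (-(m : ℤ)) := by rwa [hm]
    exact F.mul_t_factor (by omega) hb' ha'

lemma isUnit_one_sub_t_mul {y : S} (hy : ∃ x ∈ F.grade 1, y = F.t * x) :
    IsUnit (1 - y) := by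
  obtain ⟨x, hx, rfl⟩ := hy
  set y := F.t * x with hydef
  have hy0 : y ∈ F.grade 0 := by
    have h := F.mul_mem F.t_mem hx
    simpa using h
  obtain ⟨c, hc, hσ⟩ := F.σ_frob y hy0
  have hσy : F.σ y = (p : S) * F.σ x := by rw [hydef, map_mul, F.σ_t]
  have hyp : y ^ p = (p : S) * (F.σ x - c) := by linear_combination hσy - hσ
  obtain ⟨z, hz, hz1⟩ := F.p_jac (F.σ x - c) (sub_mem (F.σ_mem x) hc)
  refine IsUnit.of_mul_eq_one ((∑ i ∈ Finset.range p, y ^ i) * z) ?_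
  have hgeom : (1 - y) * (∑ i ∈ Finset.range p, y ^ i) = 1 - y ^ p := by
    linear_combination (-1 : S) * geom_sum_mul y p
  calc (1 - y) * ((∑ i ∈ Finset.range p, y ^ i) * z)
      = ((1 - y) * (∑ i ∈ Finset.range p, y ^ i)) * z := by ring
    _ = (1 - y ^ p) * z := by rw [hgeom]
    _ = (1 - (p : S) * (F.σ x - c)) * z := by rw [hyp]
    _ = 1 := hz1

end Frame

namespace Frame

variable {p : ℕ} {S : Type} [CommRing S] (F : Frame p S)

lemma t1_sum {ι : Type} (s : Finset ι) (g : ι → S)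
    (h : ∀ i ∈ s, ∃ x ∈ F.grade 1, g i = F.t * x) :
    ∃ x ∈ F.grade 1, ∑ i ∈ s, g i = F.t * x := by
  classical
  induction s using Finset.induction with
  | empty => exact ⟨0, zero_mem _, by simp⟩
  | @insert i s hnotmem ih =>
    obtain ⟨x1, hx1, h1⟩ := h i (Finset.mem_insert_self i s)
    obtain ⟨x2, hx2, h2⟩ := ih (fun j hj => h j (Finset.mem_insert_of_mem hj))
    exact ⟨x1 + x2, add_mem hx1 hx2, by rw [Finset.sum_insert hnotmem, h1, h2, mul_add]⟩

lemma hsmS : ∀ {m n : ℤ} {a x : S}, a ∈ F.grade m → x ∈ F.grade n →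
    a • x ∈ F.grade (m + n) := fun hm hn => by
  simpa [smul_eq_mul] using F.mul_mem hm hn

lemma gproj_zero_kerRho [DirectSum.Decomposition F.grade] {k : S} (hk : k ∈ F.kerRho) :
    ∃ x ∈ F.grade 1, gproj F.grade 0 k = F.t * x := by
  rw [Frame.kerRho] at hk
  refine Submodule.span_induction ?_ ?_ ?_ ?_ hk
  · rintro g (⟨w, hw, rfl⟩ | hg)
    · refine ⟨w, hw, ?_⟩
      refine gproj_of_mem_same F.grade ?_
      have h := F.mul_mem F.t_mem hw
      simpa using h
    · simp only [Set.mem_iUnion] at hg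
      obtain ⟨n, hn0, hgn⟩ := hg
      exact ⟨0, zero_mem _, by rw [gproj_of_mem_ne F.grade hgn hn0, mul_zero]⟩
  · exact ⟨0, zero_mem _, by simp⟩
  · rintro a b _ _ ⟨x1, hx1, h1⟩ ⟨x2, hx2, h2⟩
    exact ⟨x1 + x2, add_mem hx1 hx2, by rw [map_add, h1, h2, mul_add]⟩
  · rintro a k _ ⟨x1, hx1, h1⟩
    obtain ⟨s, hs0, hs⟩ := exists_gproj_finset F.grade a
    have hrw : gproj F.grade 0 (a • k) =
        ∑ j ∈ s, (gproj F.grade j a) * gproj F.grade (-j) k := by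
      conv_lhs => rw [← hs]
      have : (∑ m ∈ s, gproj F.grade m a) • k = ∑ m ∈ s, (gproj F.grade m a) • k :=
        Finset.sum_smul
      rw [this, map_sum]
      refine Finset.sum_congr rfl fun j _ => ?_
      rw [gproj_smul_left F.grade F.grade (fun hm hn => F.hsmS hm hn)
        (gproj_mem F.grade j a) k 0, zero_sub, smul_eq_mul]
    rw [hrw]
    refine F.t1_sum s _ fun j _ => ?_
    by_cases hj : j = 0
    · subst hj
      refine ⟨gproj F.grade 0 a * x1, ?_, by rw [neg_zero, h1]; ring⟩
      have h := F.mul_mem (gproj_mem F.grade 0 a) hx1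
      simpa using h
    · exact F.mul_opp_deg hj (gproj_mem F.grade j a) (gproj_mem F.grade (-j) k)

end Frame

section Nakayama

variable {p : ℕ} {S : Type} [CommRing S]

lemma exists_homog_gen_finset {M : Type} [AddCommGroup M] [Module S M]
    (ℳ : ℤ → AddSubgroup M) [DirectSum.Decomposition ℳ]
    {V : Submodule S M} (hV : V.FG)
    (hVgr : ∀ (n : ℤ), ∀ x ∈ V, gproj ℳ n x ∈ V) :
    ∃ s : Finset M, (∀ x ∈ s, ∃ i, x ∈ ℳ i) ∧ Submodule.span S ↑s = V := by
  classical
  obtain ⟨T, hT⟩ := hV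
  refine ⟨T.biUnion (fun x =>
    ((DirectSum.decompose ℳ x).support.image (fun n => gproj ℳ n x))), ?_, ?_⟩
  · intro y hy
    simp only [Finset.mem_biUnion, Finset.mem_image] at hy
    obtain ⟨x, _, n, _, rfl⟩ := hy
    exact ⟨n, gproj_mem ℳ n x⟩
  · apply le_antisymm
    · rw [Submodule.span_le]
      intro y hy
      simp only [Finset.coe_biUnion, Set.mem_iUnion, Finset.mem_coe, Finset.mem_image] at hy
      obtain ⟨x, hx, n, _, rfl⟩ := hy
      exact hVgr n x (hT ▸ Submodule.subset_span hx)
    · rw [← hT, Submodule.span_le]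
      intro x hx
      have hxsum : x = ∑ n ∈ (DirectSum.decompose ℳ x).support, gproj ℳ n x := by
        simpa only [gproj_apply] using (DirectSum.sum_support_decompose ℳ x).symm
      rw [hxsum]
      refine Submodule.sum_mem _ fun n hn => Submodule.subset_span ?_
      simp only [Finset.coe_biUnion, Set.mem_iUnion, Finset.mem_coe, Finset.mem_image]
      exact ⟨x, hx, n, hn, rfl⟩

lemma graded_nakayama (F : Frame p S) [DirectSum.Decomposition F.grade]
    {M : Type} [AddCommGroup M] [Module S M] (ℳ : ℤ → AddSubgroup M)
    [DirectSum.Decomposition ℳ]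
    (hsm : ∀ {m n : ℤ} {a : S} {x : M}, a ∈ F.grade m → x ∈ ℳ n → a • x ∈ ℳ (m + n))
    (W V : Submodule S M)
    (hW : ∀ (n : ℤ), ∀ x ∈ W, gproj ℳ n x ∈ W)
    (hVfg : V.FG) (hVgr : ∀ (n : ℤ), ∀ x ∈ V, gproj ℳ n x ∈ V)
    (hle : V ≤ W ⊔ F.kerRho • V) : V ≤ W := by
  classical
  obtain ⟨s, hshom, hsspan⟩ := exists_homog_gen_finset ℳ hVfg hVgr
  suffices H : ∀ (k : ℕ) (s : Finset M), s.card ≤ k → (∀ x ∈ s, ∃ i, x ∈ ℳ i) →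
      Submodule.span S ↑s ≤ V → V ≤ W ⊔ Submodule.span S ↑s → V ≤ W by
    exact H s.card s le_rfl hshom hsspan.le (by rw [hsspan]; exact le_sup_right)
  intro k
  induction k with
  | zero =>
    intro s hcard _ _ hV2
    have hs : s = ∅ := Finset.card_eq_zero.mp (Nat.le_zero.mp hcard)
    subst hs
    simpa using hV2
  | succ k ih =>
    intro s hcard hhom hsub hV2
    rcases s.eq_empty_or_nonempty with rfl | ⟨x₀, hx₀⟩
    · simpa using hV2
    · have hx₀V : x₀ ∈ V := hsub (Submodule.subset_span hx₀)
      have h1 : x₀ ∈ W ⊔ F.kerRho • Submodule.span S (↑s : Set M) := by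
        have h3 : W ⊔ F.kerRho • V ≤ W ⊔ F.kerRho • Submodule.span S (↑s : Set M) := by
          refine sup_le le_sup_left ?_
          calc F.kerRho • V ≤ F.kerRho • (W ⊔ Submodule.span S (↑s : Set M)) :=
                Submodule.smul_mono le_rfl hV2
            _ = F.kerRho • W ⊔ F.kerRho • Submodule.span S (↑s : Set M) :=
                Submodule.smul_sup F.kerRho W (Submodule.span S (↑s : Set M))
            _ ≤ W ⊔ F.kerRho • Submodule.span S (↑s : Set M) :=
                sup_le_sup_right Submodule.smul_le_right _
        exact h3 (hle hx₀V)
      obtain ⟨w, hw, u, hu, hxeq⟩ := Submodule.mem_sup.mp h1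
      -- representation of u as a K-combination of s
      have hrep : ∃ a : M → S, (∀ y, a y ∈ F.kerRho) ∧ u = ∑ y ∈ s, a y • y := by
        refine Submodule.smul_induction_on hu ?_ ?_
        · intro r hr v hv
          obtain ⟨g, -, hg⟩ := Submodule.mem_span_finset.mp hv
          refine ⟨fun y => r * g y, fun y => Ideal.mul_mem_right _ _ hr, ?_⟩
          rw [← hg, Finset.smul_sum]
          exact Finset.sum_congr rfl fun y _ => (smul_smul r (g y) y)
        · rintro u1 u2 ⟨a1, ha1, rfl⟩ ⟨a2, ha2, rfl⟩
          refine ⟨fun y => a1 y + a2 y, fun y => add_mem (ha1 y) (ha2 y), ?_⟩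
          rw [← Finset.sum_add_distrib]
          exact Finset.sum_congr rfl fun y _ => (add_smul (a1 y) (a2 y) y).symm
      obtain ⟨a, haK, hurep⟩ := hrep
      -- degree function
      have hdegex : ∀ y ∈ s, ∃ i, y ∈ ℳ i := hhom
      let deg : M → ℤ := fun y => if h : ∃ i, y ∈ ℳ i then h.choose else 0
      have hdeg : ∀ y ∈ s, y ∈ ℳ (deg y) := by
        intro y hy
        have h := hhom y hy
        simp only [deg, dif_pos h]
        exact h.choose_spec
      have hd : x₀ ∈ ℳ (deg x₀) := hdeg x₀ hx₀
      -- project in degree deg x₀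
      have hproj : x₀ = gproj ℳ (deg x₀) w +
          ∑ y ∈ s, (gproj F.grade (deg x₀ - deg y) (a y)) • y := by
        calc x₀ = gproj ℳ (deg x₀) x₀ := (gproj_of_mem_same ℳ hd).symm
          _ = gproj ℳ (deg x₀) (w + u) := by rw [hxeq]
          _ = gproj ℳ (deg x₀) w + gproj ℳ (deg x₀) u := map_add _ _ _
          _ = gproj ℳ (deg x₀) w + ∑ y ∈ s, gproj ℳ (deg x₀) (a y • y) := by
              rw [hurep, map_sum]
          _ = _ := by
              congr 1
              exact Finset.sum_congr rfl fun y hy =>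
                gproj_smul_right F.grade ℳ (fun hm hn => hsm hm hn) (a y) (hdeg y hy) (deg x₀)
      set b : S := gproj F.grade (deg x₀ - deg x₀) (a x₀) with hbdef
      have hbt : ∃ x ∈ F.grade 1, b = F.t * x := by
        have h0 : deg x₀ - deg x₀ = (0 : ℤ) := sub_self _
        rw [hbdef, h0]
        exact F.gproj_zero_kerRho (haK x₀)
      have hunit : IsUnit (1 - b) := F.isUnit_one_sub_t_mul hbt
      -- x₀ lies in W ⊔ span (s.erase x₀)
      have hx₀mem : x₀ ∈ W ⊔ Submodule.span S (↑(s.erase x₀) : Set M) := by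
        have hsplit : ∑ y ∈ s, (gproj F.grade (deg x₀ - deg y) (a y)) • y =
            b • x₀ + ∑ y ∈ s.erase x₀, (gproj F.grade (deg x₀ - deg y) (a y)) • y :=
          (Finset.add_sum_erase s (fun y => (gproj F.grade (deg x₀ - deg y) (a y)) • y)
            hx₀).symm
        have hsum : (1 - b) • x₀ = gproj ℳ (deg x₀) w +
            ∑ y ∈ s.erase x₀, (gproj F.grade (deg x₀ - deg y) (a y)) • y := by
          have h5 : x₀ = gproj ℳ (deg x₀) w +
              (b • x₀ + ∑ y ∈ s.erase x₀, (gproj F.grade (deg x₀ - deg y) (a y)) • y) := by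
            conv_rhs => rw [← hsplit]
            exact hproj
          rw [sub_smul, one_smul]
          nth_rewrite 1 [h5]
          abel
        have hmem : (1 - b) • x₀ ∈ W ⊔ Submodule.span S (↑(s.erase x₀) : Set M) := by
          rw [hsum]
          refine Submodule.add_mem _ (Submodule.mem_sup_left (hW _ _ hw)) ?_
          refine Submodule.sum_mem _ fun y hy => Submodule.mem_sup_right ?_
          exact Submodule.smul_mem _ _ (Submodule.subset_span (Finset.mem_coe.mpr hy))
        have hxeq2 : x₀ = ((hunit.unit⁻¹ : Sˣ) : S) • ((1 - b) • x₀) := by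
          rw [smul_smul]
          have : ((hunit.unit⁻¹ : Sˣ) : S) * (1 - b) = 1 := by
            have h := hunit.unit.inv_mul
            rwa [hunit.unit_spec] at h
          rw [this, one_smul]
        have hfin := Submodule.smul_mem (W ⊔ Submodule.span S (↑(s.erase x₀) : Set M))
          ((hunit.unit⁻¹ : Sˣ) : S) hmem
        rwa [← hxeq2] at hfin
      refine ih (s.erase x₀) ?_ (fun y hy => hhom y (Finset.mem_of_mem_erase hy)) ?_ ?_
      · rw [Finset.card_erase_of_mem hx₀]
        omega
      · exact le_trans (Submodule.span_mono (by simpa using Finset.erase_subset x₀ s)) hsub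
      · refine le_trans hV2 (sup_le le_sup_left ?_)
        rw [Submodule.span_le]
        intro y hy
        simp only [Finset.mem_coe] at hy
        rcases eq_or_ne y x₀ with rfl | hne
        · exact hx₀mem
        · exact Submodule.mem_sup_right
            (Submodule.subset_span (Finset.mem_coe.mpr (Finset.mem_erase.mpr ⟨hne, hy⟩)))

end Nakayama


/-- For finitely generated graded `S`-modules `M`, `N` over a frame, with `M`
projective as an `S`-module, a degree-preserving `S`-linear map `f : N → M` is bijective if
and only if its reduction modulo `K = ker ρ` (i.e. the induced map
`N ⊗_{S,ρ} R = N/KN → M/KM = M ⊗_{S,ρ} R`) is bijective. -/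
theorem frame_bijective_iff_reduction_bijective (p : ℕ) (hp : p.Prime)
    {S : Type} [CommRing S] (F : Frame p S)
    {M : Type} [AddCommGroup M] [Module S M]
    (ℳ : ℤ → AddSubgroup M)
    (hMsmul : ∀ {m n : ℤ} {a : S} {x : M}, a ∈ F.grade m → x ∈ ℳ n → a • x ∈ ℳ (m + n))
    (hMinternal : DirectSum.IsInternal ℳ)
    (hMfin : Module.Finite S M)
    (hMproj : Module.Projective S M)
    {N : Type} [AddCommGroup N] [Module S N]
    (𝒩 : ℤ → AddSubgroup N)
    (hNsmul : ∀ {m n : ℤ} {a : S} {x : N}, a ∈ F.grade m → x ∈ 𝒩 n → a • x ∈ 𝒩 (m + n))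
    (hNinternal : DirectSum.IsInternal 𝒩)
    (hNfin : Module.Finite S N)
    (f : N →ₗ[S] M)
    (hf : ∀ (n : ℤ), ∀ x ∈ 𝒩 n, f x ∈ ℳ n) :
    Function.Bijective f ↔
      Function.Bijective
        (Submodule.mapQ (F.kerRho • (⊤ : Submodule S N)) (F.kerRho • (⊤ : Submodule S M)) f
          (Submodule.map_le_iff_le_comap.mp (by
            rw [Submodule.map_smul'']
            exact smul_mono_right _ le_top))) := by
  letI : DirectSum.Decomposition F.grade := F.isInternal.chooseDecomposition
  letI : DirectSum.Decomposition ℳ := hMinternal.chooseDecomposition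
  letI : DirectSum.Decomposition 𝒩 := hNinternal.chooseDecomposition
  constructor
  · -- forward direction
    intro hb
    constructor
    · -- injectivity of reduction
      intro q q' h
      obtain ⟨x, rfl⟩ := Submodule.Quotient.mk_surjective _ q
      obtain ⟨x', rfl⟩ := Submodule.Quotient.mk_surjective _ q'
      rw [Submodule.mapQ_apply, Submodule.mapQ_apply, Submodule.Quotient.eq] at h
      rw [Submodule.Quotient.eq]
      have h1 : f (x - x') ∈ F.kerRho • (⊤ : Submodule S M) := by rw [map_sub]; exact h
      have h2 : F.kerRho • (⊤ : Submodule S M) =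
          Submodule.map f (F.kerRho • (⊤ : Submodule S N)) := by
        rw [Submodule.map_smul'', Submodule.map_top,
          LinearMap.range_eq_top.mpr hb.surjective]
      rw [h2] at h1
      obtain ⟨y, hy, hyx⟩ := h1
      have hxy := hb.injective hyx
      rwa [← hxy]
    · -- surjectivity of reduction
      intro q
      obtain ⟨m, rfl⟩ := Submodule.Quotient.mk_surjective _ q
      obtain ⟨n, rfl⟩ := hb.surjective m
      exact ⟨Submodule.Quotient.mk n, by rw [Submodule.mapQ_apply]⟩
  · -- reverse direction
    intro hbar
    -- surjectivity
    have hrange_gr : ∀ (n : ℤ), ∀ x ∈ LinearMap.range f, gproj ℳ n x ∈ LinearMap.range f := by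
      rintro n _ ⟨y, rfl⟩
      rw [gproj_map_comm ℳ 𝒩 f hf y n]
      exact ⟨gproj 𝒩 n y, rfl⟩
    have hsurj : Function.Surjective f := by
      have hle : (⊤ : Submodule S M) ≤ LinearMap.range f ⊔ F.kerRho • (⊤ : Submodule S M) := by
        intro m _
        obtain ⟨q, hq⟩ := hbar.surjective (Submodule.Quotient.mk m)
        obtain ⟨n, rfl⟩ := Submodule.Quotient.mk_surjective _ q
        rw [Submodule.mapQ_apply] at hq
        have h3 : f n - m ∈ F.kerRho • (⊤ : Submodule S M) := (Submodule.Quotient.eq _).mp hq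
        have h4 : m = f n - (f n - m) := (sub_sub_cancel _ _).symm
        rw [h4]
        exact Submodule.sub_mem _ (Submodule.mem_sup_left (LinearMap.mem_range_self f n))
          (Submodule.mem_sup_right h3)
      have htop := graded_nakayama F ℳ (fun hm hn => hMsmul hm hn) (LinearMap.range f) ⊤
        hrange_gr Module.Finite.fg_top (fun n x _ => trivial) hle
      exact LinearMap.range_eq_top.mp (top_le_iff.mp htop)
    -- splitting
    obtain ⟨sec, hsec⟩ := Module.projective_lifting_property f LinearMap.id hsurj
    set π : N →ₗ[S] N := LinearMap.id - sec ∘ₗ f with hπdef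
    have hπ_ker : ∀ x ∈ LinearMap.ker f, π x = x := by
      intro x hx
      have h0 : f x = 0 := LinearMap.mem_ker.mp hx
      simp [hπdef, h0]
    have hπ_into : ∀ x, π x ∈ LinearMap.ker f := by
      intro x
      have h1 : f (sec (f x)) = f x := LinearMap.congr_fun hsec (f x)
      simp [hπdef, LinearMap.mem_ker, map_sub, h1]
    have hker_eq : LinearMap.ker f = Submodule.map π ⊤ := by
      apply le_antisymm
      · intro x hx
        exact ⟨x, trivial, hπ_ker x hx⟩
      · rintro _ ⟨x, -, rfl⟩
        exact hπ_into x
    have hker_fg : (LinearMap.ker f).FG := by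
      rw [hker_eq]
      exact Submodule.FG.map π (Module.Finite.fg_top)
    have hker_gr : ∀ (n : ℤ), ∀ x ∈ LinearMap.ker f, gproj 𝒩 n x ∈ LinearMap.ker f := by
      intro n x hx
      rw [LinearMap.mem_ker, ← gproj_map_comm ℳ 𝒩 f hf x n, LinearMap.mem_ker.mp hx, map_zero]
    have hker_le : LinearMap.ker f ≤ F.kerRho • (LinearMap.ker f) := by
      intro x hx
      have h0 : Submodule.Quotient.mk x = (0 : N ⧸ F.kerRho • (⊤ : Submodule S N)) := by
        apply hbar.injective
        rw [Submodule.mapQ_apply, LinearMap.mem_ker.mp hx, map_zero]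
        simp
      have hxK : x ∈ F.kerRho • (⊤ : Submodule S N) := (Submodule.Quotient.mk_eq_zero _).mp h0
      have h1 : π x ∈ Submodule.map π (F.kerRho • (⊤ : Submodule S N)) :=
        Submodule.mem_map_of_mem hxK
      rw [Submodule.map_smul'', Submodule.map_top, LinearMap.range_eq_map, ← hker_eq] at h1
      rwa [hπ_ker x hx] at h1
    have hker_bot := graded_nakayama F 𝒩 (fun hm hn => hNsmul hm hn) ⊥ (LinearMap.ker f)
      (fun n x hx => by rw [Submodule.mem_bot] at hx; rw [hx, map_zero]; exact Submodule.zero_mem _)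
      hker_fg hker_gr (le_trans hker_le le_sup_right)
    exact ⟨LinearMap.ker_eq_bot.mp (le_bot_iff.mp hker_bot), hsurj⟩
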